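/- arXiv:2412.01256 — 2 statements merged into one kernel-verified Lean document; each statement's English description precedes it below -/
import Mathlib

section
/- Let s ∈ ℝ^C be a probability vector. Then Σ_{y=1}^C ℓ_MAE(s, e_y) = 2(C − 1); i.e., the sum of the MAE loss over all possible one-hot labels is a constant independent of s. Hence MAE is a symmetric loss in the sense of Ghosh et al. -/
open Finset in
/-- The MAE loss is symmetric: summing it over all one-hot labels gives the
constant `2(C - 1)`, independently of the probability vector `s`. -/
theorem mae_symmetric_loss (C : ℕ) (s : Fin C → ℝ) (hs : ∀ c, 0 ≤ s c)
    (hsum : ∑ c, s c = 1) :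
    ∑ y : Fin C, ∑ c : Fin C, |(if c = y then (1 : ℝ) else 0) - s c|
      = 2 * ((C : ℝ) - 1) := by
  have hle : ∀ y : Fin C, s y ≤ 1 := by
    intro y
    rw [← hsum]
    exact Finset.single_le_sum (fun i _ => hs i) (Finset.mem_univ y)
  have h : ∀ y : Fin C,
      ∑ c : Fin C, |(if c = y then (1 : ℝ) else 0) - s c| = 2 - 2 * s y := by
    intro y
    have : ∀ c : Fin C, |(if c = y then (1 : ℝ) else 0) - s c|
        = (if c = y then (1 : ℝ) - 2 * s c else 0) + s c := by
      intro c
      by_cases hc : c = y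
      · simp [hc, abs_of_nonneg (by linarith [hle y] : (0:ℝ) ≤ 1 - s y)]
        ring
      · simp [hc, abs_of_nonpos (by linarith [hs c] : (0:ℝ) - s c ≤ 0), hs c]
    simp only [this, Finset.sum_add_distrib, Finset.sum_ite_eq' Finset.univ y,
      Finset.mem_univ, if_true, hsum]
    ring
  simp only [h, Finset.sum_sub_distrib, Finset.sum_const, Finset.card_univ,
    Fintype.card_fin, nsmul_eq_mul, ← Finset.mul_sum, hsum]
  ring
end

section
/- Fix s ∈ (1/2, 1). The cross-entropy task-relevant coefficient increment (1 − p)/s − p/(1 − s) is strictly positive if and only if p < 1 − s, whereas the MAE increment 2 − 4p is strictly positive for all p < 1/2. In particular, for every noise rate p with 1 − s < p < 1/2, the CE increment is strictly negative while the MAE increment is strictly positive. -/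
/-- Sign of the task-relevant coefficient increments: the CE increment
`(1-p)/s - p/(1-s)` is positive iff `p < 1 - s`, the MAE increment `2 - 4p`
is positive for all `p < 1/2`, and for `1 - s < p < 1/2` the CE increment is
negative while the MAE increment is positive. -/
theorem ce_vs_mae_increments (s : ℝ) (hs : 1 / 2 < s) (hs1 : s < 1) :
    (∀ p : ℝ, 0 < (1 - p) / s - p / (1 - s) ↔ p < 1 - s) ∧
    (∀ p : ℝ, p < 1 / 2 → 0 < 2 - 4 * p) ∧
    (∀ p : ℝ, 1 - s < p → p < 1 / 2 →
      (1 - p) / s - p / (1 - s) < 0 ∧ 0 < 2 - 4 * p) := by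
  have hs0 : (0:ℝ) < s := by linarith
  have hs1' : (0:ℝ) < 1 - s := by linarith
  have key : ∀ p : ℝ, (1 - p) / s - p / (1 - s) = (1 - s - p) / (s * (1 - s)) := by
    intro p
    field_simp
    ring
  refine ⟨fun p => ?_, fun p hp => by linarith, fun p h1 h2 => ⟨?_, by linarith⟩⟩
  · rw [key, div_pos_iff]
    constructor
    · rintro (⟨h, _⟩ | ⟨_, h⟩)
      · linarith
      · nlinarith
    · intro h
      exact Or.inl ⟨by linarith, by positivity⟩
  · rw [key]
    apply div_neg_of_neg_of_pos (by linarith) (by positivity)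
end
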